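/- Let I, K ⊆ Π with I orthogonal to K \ I. Then −(Φ \ Γ(I,K)) = Γ(K\I, I), i.e. {−α | α ∈ Φ \ (Φ_I ∪ (Φ⁺ \ Φ_K))} = Φ_{K\I} ∪ (Φ⁺ \ Φ_I). -/

import Mathlib

variable {V : Type*} [NormedAddCommGroup V] [InnerProductSpace ℝ V]

/-- `Φ` is a finite reduced crystallographic root system spanning `V`. -/
structure IsRootSystem (Φ : Set V) : Prop where
  finite : Φ.Finite
  zero_not_mem : (0 : V) ∉ Φ
  span_top : Submodule.span ℝ Φ = ⊤
  reduced : ∀ α ∈ Φ, ∀ c : ℝ, c • α ∈ Φ → c = 1 ∨ c = -1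
  crystallographic : ∀ α ∈ Φ, ∀ β ∈ Φ,
    ∃ n : ℤ, 2 * (inner ℝ β α : ℝ) / (inner ℝ α α : ℝ) = (n : ℝ)
  reflect_mem : ∀ α ∈ Φ, ∀ β ∈ Φ,
    β - (2 * (inner ℝ β α : ℝ) / (inner ℝ α α : ℝ)) • α ∈ Φ

/-- `α` is a nonnegative linear combination of elements of `Δ`. -/
def IsNonnegComb (Δ : Set V) (α : V) : Prop :=
  ∃ c : V →₀ ℝ, (c.support : Set V) ⊆ Δ ∧ (∀ v, 0 ≤ c v) ∧ α = c.sum fun v r => r • v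

/-- `Δ` is a base (set of simple roots) of the root system `Φ`. -/
structure IsBase (Φ Δ : Set V) : Prop where
  subset : Δ ⊆ Φ
  indep : LinearIndependent ℝ (Subtype.val : Δ → V)
  pos_or_neg : ∀ α ∈ Φ, IsNonnegComb Δ α ∨ IsNonnegComb Δ (-α)

/-- The set of positive roots with respect to the base `Δ`. -/
def posRoots (Φ Δ : Set V) : Set V := {α ∈ Φ | IsNonnegComb Δ α}

/-- The set of negative roots with respect to the base `Δ`. -/
def negRoots (Φ Δ : Set V) : Set V := {α ∈ Φ | IsNonnegComb Δ (-α)}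

/-- `Φ_A := Φ ∩ span A`. -/
def rootsIn (Φ A : Set V) : Set V := Φ ∩ (Submodule.span ℝ A : Set V)

/-- `Φ_A⁺`. -/
def posRootsIn (Φ Δ A : Set V) : Set V := rootsIn Φ A ∩ posRoots Φ Δ

/-- `Φ_A⁻`. -/
def negRootsIn (Φ Δ A : Set V) : Set V := rootsIn Φ A ∩ negRoots Φ Δ

/-- `Γ` is a closed subset of `Φ`. -/
def IsClosedSubset (Φ Γ : Set V) : Prop := ∀ α ∈ Γ, ∀ β ∈ Γ, α + β ∈ Φ → α + β ∈ Γ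

/-- `X` and `Y` are orthogonal sets of vectors. -/
def OrthogonalSets (X Y : Set V) : Prop := ∀ α ∈ X, ∀ β ∈ Y, (inner ℝ α β : ℝ) = 0


namespace Aux

variable {Φ Δ : Set V}


variable {Φ Δ : Set V}

lemma IsNonnegComb.mem_span {α : V} (h : IsNonnegComb Δ α) : α ∈ Submodule.span ℝ Δ := by
  obtain ⟨c, hs, _, rfl⟩ := h
  rw [Finsupp.sum]
  exact Submodule.sum_mem _ fun v hv =>
    Submodule.smul_mem _ _ (Submodule.subset_span (hs hv))

lemma repr_eq_of_sum (b : Module.Basis Δ ℝ V) (hb : ∀ i : Δ, b i = (i : V))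
    {c : V →₀ ℝ} (hs : (c.support : Set V) ⊆ Δ) {α : V}
    (hα : α = c.sum fun v r => r • v) (i : Δ) : b.repr α i = c i := by
  classical
  have hbij : Set.BijOn (Subtype.val : Δ → V) (Subtype.val ⁻¹' ↑c.support) ↑c.support :=
    ⟨fun x hx => hx, Set.injOn_of_injective Subtype.val_injective,
      fun v hv => ⟨⟨v, hs hv⟩, hv, rfl⟩⟩
  set d := Finsupp.comapDomain (Subtype.val : Δ → V) c hbij.injOn with hd
  have key : b.repr.symm d = α := by
    rw [Module.Basis.repr_symm_apply, Finsupp.linearCombination_apply, hα,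
      ← Finsupp.sum_comapDomain (Subtype.val : Δ → V) c (fun v r => r • v) hbij]
    exact Finsupp.sum_congr fun j _ => by rw [hb j]; rfl
  have : b.repr α = d := by rw [← key, LinearEquiv.apply_symm_apply]
  rw [this]; rfl

lemma repr_nonneg (b : Module.Basis Δ ℝ V) (hb : ∀ i : Δ, b i = (i : V))
    {α : V} (hα : IsNonnegComb Δ α) (i : Δ) : 0 ≤ b.repr α i := by
  obtain ⟨c, hs, hpos, hsum⟩ := hα
  rw [repr_eq_of_sum b hb hs hsum]
  exact hpos i

lemma isNonnegComb_of_repr (b : Module.Basis Δ ℝ V) (hb : ∀ i : Δ, b i = (i : V))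
    {α : V} (h : ∀ i, 0 ≤ b.repr α i) : IsNonnegComb Δ α := by
  classical
  refine ⟨Finsupp.mapDomain Subtype.val (b.repr α), ?_, ?_, ?_⟩
  · refine subset_trans (Finset.coe_subset.2 Finsupp.mapDomain_support) ?_
    intro v hv
    simp only [Finset.coe_image, Set.mem_image] at hv
    obtain ⟨i, _, rfl⟩ := hv
    exact i.2
  · intro v
    by_cases hv : v ∈ Set.range (Subtype.val : Δ → V)
    · obtain ⟨i, rfl⟩ := hv
      rw [Finsupp.mapDomain_apply Subtype.val_injective]
      exact h i
    · rw [Finsupp.mapDomain_notin_range _ _ hv]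
  · rw [Finsupp.sum_mapDomain_index (h := fun v r => r • v) (fun v => zero_smul ℝ v)
      (fun v r s => add_smul r s v)]
    have := b.linearCombination_repr α
    rw [Finsupp.linearCombination_apply] at this
    conv_lhs => rw [← this]
    exact Finsupp.sum_congr fun j _ => by rw [hb j]


lemma inner_self_pos' (hΦ : IsRootSystem Φ) {α : V} (hα : α ∈ Φ) : 0 < (inner ℝ α α : ℝ) := by
  have hne : α ≠ 0 := fun h0 => hΦ.zero_not_mem (h0 ▸ hα)
  have h1 : (inner ℝ α α : ℝ) ≠ 0 := fun h => hne ((inner_self_eq_zero (𝕜 := ℝ)).1 h)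
  exact lt_of_le_of_ne real_inner_self_nonneg (Ne.symm h1)

lemma neg_mem (hΦ : IsRootSystem Φ) {α : V} (hα : α ∈ Φ) : -α ∈ Φ := by
  have h := hΦ.reflect_mem α hα α hα
  have hip : (inner ℝ α α : ℝ) ≠ 0 := (inner_self_pos' hΦ hα).ne'
  rw [show 2 * (inner ℝ α α : ℝ) / (inner ℝ α α : ℝ) = 2 by field_simp] at h
  have : α - (2 : ℝ) • α = -α := by module
  rwa [this] at h

lemma span_delta_eq_top (hΦ : IsRootSystem Φ) (hΔ : IsBase Φ Δ) :
    Submodule.span ℝ Δ = ⊤ := by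
  rw [← top_le_iff, ← hΦ.span_top, Submodule.span_le]
  intro α hα
  rcases hΔ.pos_or_neg α hα with h | h
  · exact IsNonnegComb.mem_span h
  · simpa using Submodule.neg_mem _ (IsNonnegComb.mem_span h)

lemma not_pos_and_neg (hΦ : IsRootSystem Φ) (b : Module.Basis Δ ℝ V) (hb : ∀ i : Δ, b i = (i : V))
    {α : V} (hα : α ∈ Φ) (h1 : IsNonnegComb Δ α) (h2 : IsNonnegComb Δ (-α)) : False := by
  have hr : b.repr α = 0 := by
    ext i
    have k1 := repr_nonneg b hb h1 i
    have k2 := repr_nonneg b hb h2 i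
    rw [map_neg, Finsupp.neg_apply] at k2
    simp only [Finsupp.coe_zero, Pi.zero_apply]
    linarith
  have : α = 0 := by simpa using congrArg b.repr.symm hr
  exact hΦ.zero_not_mem (this ▸ hα)

lemma mem_span_iff_support (b : Module.Basis Δ ℝ V) (hb : ∀ i : Δ, b i = (i : V))
    {A : Set V} (hA : A ⊆ Δ) {α : V} :
    α ∈ Submodule.span ℝ A ↔ ∀ i : Δ, b.repr α i ≠ 0 → (i : V) ∈ A := by
  have himg : b '' (Subtype.val ⁻¹' A) = A := by
    ext v
    constructor
    · rintro ⟨i, hi, rfl⟩; rw [hb]; exact hi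
    · intro hv; exact ⟨⟨v, hA hv⟩, hv, hb _⟩
  constructor
  · intro hspan i hi
    have h' : ((b.repr α).support : Set Δ) ⊆ Subtype.val ⁻¹' A :=
      b.mem_span_image.1 (by rwa [himg])
    exact h' (Finsupp.mem_support_iff.2 hi)
  · intro h
    rw [← himg]
    exact b.mem_span_image.2 fun i hi => h i (Finsupp.mem_support_iff.1 hi)

lemma orth_span {X Y : Set V} (h : OrthogonalSets X Y) {v w : V}
    (hv : v ∈ Submodule.span ℝ X) (hw : w ∈ Submodule.span ℝ Y) : (inner ℝ v w : ℝ) = 0 :=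
  (Submodule.isOrtho_span.2 fun u hu x hx => h u hu x hx).inner_eq hv hw

lemma exists_inner_pos (hΦ : IsRootSystem Φ) (b : Module.Basis Δ ℝ V) (hb : ∀ i : Δ, b i = (i : V))
    {A : Set V} (hA : A ⊆ Δ) {α : V} (hα : α ∈ Φ) (hpos : IsNonnegComb Δ α)
    (hspan : α ∈ Submodule.span ℝ A) : ∃ δ ∈ A, 0 < (inner ℝ α δ : ℝ) := by
  by_contra hcon
  push_neg at hcon
  have hself : 0 < (inner ℝ α α : ℝ) := inner_self_pos' hΦ hα
  have hexp : α = ∑ i ∈ (b.repr α).support, b.repr α i • (i : V) := by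
    have := b.linearCombination_repr α
    rw [Finsupp.linearCombination_apply, Finsupp.sum] at this
    conv_lhs => rw [← this]
    exact Finset.sum_congr rfl fun j _ => by rw [hb j]
  have hsum : (inner ℝ α α : ℝ) = ∑ i ∈ (b.repr α).support, b.repr α i * (inner ℝ α (i : V) : ℝ) :=
    calc (inner ℝ α α : ℝ)
        = (inner ℝ α (∑ i ∈ (b.repr α).support, b.repr α i • (i : V)) : ℝ) := by rw [← hexp]
      _ = ∑ i ∈ (b.repr α).support, (inner ℝ α (b.repr α i • (i : V)) : ℝ) := inner_sum _ _ _
      _ = ∑ i ∈ (b.repr α).support, b.repr α i * (inner ℝ α (i : V) : ℝ) :=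
          Finset.sum_congr rfl fun j _ => real_inner_smul_right _ _ _
  have hle : (inner ℝ α α : ℝ) ≤ 0 := by
    rw [hsum]
    refine Finset.sum_nonpos fun i hi => ?_
    have hiA : (i : V) ∈ A :=
      (mem_span_iff_support b hb hA).1 hspan i (Finsupp.mem_support_iff.1 hi)
    have h1 : 0 ≤ b.repr α i := repr_nonneg b hb hpos i
    have h2 : (inner ℝ α (i : V) : ℝ) ≤ 0 := hcon (i : V) hiA
    exact mul_nonpos_of_nonneg_of_nonpos h1 h2
  linarith

lemma reflect_pos (hΦ : IsRootSystem Φ) (hΔ : IsBase Φ Δ)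
    (b : Module.Basis Δ ℝ V) (hb : ∀ i : Δ, b i = (i : V)) {α δ : V} (hα : α ∈ Φ)
    (hpos : IsNonnegComb Δ α) (hδ : δ ∈ Δ) (hne : α ≠ δ) :
    IsNonnegComb Δ (α - (2 * (inner ℝ α δ : ℝ) / (inner ℝ δ δ : ℝ)) • δ) := by
  classical
  set n : ℝ := 2 * (inner ℝ α δ : ℝ) / (inner ℝ δ δ : ℝ) with hn
  set β : V := α - n • δ with hβ
  have hβΦ : β ∈ Φ := hΦ.reflect_mem δ (hΔ.subset hδ) α hα
  rcases hΔ.pos_or_neg β hβΦ with h | h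
  · exact h
  · exfalso
    have hcoefβ : ∀ i : Δ, b.repr β i ≤ 0 := fun i => by
      have := repr_nonneg b hb h i
      rw [map_neg, Finsupp.neg_apply] at this
      linarith
    have hδrepr : b.repr δ = Finsupp.single ⟨δ, hδ⟩ 1 := by
      have h5 := b.repr_self ⟨δ, hδ⟩
      rwa [hb] at h5
    have hkey : ∀ i : Δ, i ≠ ⟨δ, hδ⟩ → b.repr α i = 0 := by
      intro i hi
      have h1 : 0 ≤ b.repr α i := repr_nonneg b hb hpos i
      have h2 : b.repr β i = b.repr α i := by
        rw [hβ, map_sub, map_smul, Finsupp.sub_apply, Finsupp.smul_apply, hδrepr,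
          Finsupp.single_apply]
        simp [Ne.symm hi]
      have := hcoefβ i
      linarith
    set c : ℝ := b.repr α ⟨δ, hδ⟩ with hc
    have hrα : b.repr α = Finsupp.single ⟨δ, hδ⟩ c := by
      ext i
      by_cases hi : i = ⟨δ, hδ⟩
      · subst hi; simp [Finsupp.single_apply, hc]
      · rw [hkey i hi, Finsupp.single_apply]; simp [Ne.symm hi]
    have hαc : α = c • δ := by
      have h3 := congrArg b.repr.symm hrα
      rw [LinearEquiv.symm_apply_apply, Module.Basis.repr_symm_single, hb] at h3
      exact h3
    rcases hΦ.reduced δ (hΔ.subset hδ) c (hαc ▸ hα) with h1 | h1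
    · exact hne (by rw [hαc, h1, one_smul])
    · have h4 : (0 : ℝ) ≤ c := repr_nonneg b hb hpos ⟨δ, hδ⟩
      rw [h1] at h4
      linarith

noncomputable def ht (b : Module.Basis Δ ℝ V) : V →ₗ[ℝ] ℝ := b.constr ℝ fun _ => (1 : ℝ)

lemma ht_simple (b : Module.Basis Δ ℝ V) (hb : ∀ i : Δ, b i = (i : V)) {δ : V} (hδ : δ ∈ Δ) :
    ht b δ = 1 := by
  have h5 := b.constr_basis (M' := ℝ) ℝ (fun _ => (1 : ℝ)) ⟨δ, hδ⟩
  rwa [hb] at h5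

lemma ht_pos (hΦ : IsRootSystem Φ) (b : Module.Basis Δ ℝ V) (hb : ∀ i : Δ, b i = (i : V))
    {α : V} (hα : α ∈ Φ) (hpos : IsNonnegComb Δ α) : 0 < ht b α := by
  rw [ht, Module.Basis.constr_apply, Finsupp.sum]
  have hne : (b.repr α).support.Nonempty := by
    rw [Finsupp.support_nonempty_iff]
    intro h0
    have : α = 0 := by simpa using congrArg b.repr.symm h0
    exact hΦ.zero_not_mem (this ▸ hα)
  refine Finset.sum_pos (fun i hi => ?_) hne
  simp only [smul_eq_mul, mul_one]
  exact lt_of_le_of_ne (repr_nonneg b hb hpos i) (Ne.symm (Finsupp.mem_support_iff.1 hi))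

lemma mem_rootsIn {Φ A : Set V} {α : V} :
    α ∈ rootsIn Φ A ↔ α ∈ Φ ∧ α ∈ Submodule.span ℝ A := Iff.rfl

lemma mem_posRoots {Φ Δ : Set V} {α : V} :
    α ∈ posRoots Φ Δ ↔ α ∈ Φ ∧ IsNonnegComb Δ α := Iff.rfl

lemma decomp (hΦ : IsRootSystem Φ) (hΔ : IsBase Φ Δ) (b : Module.Basis Δ ℝ V)
    (hb : ∀ i : Δ, b i = (i : V)) {A B : Set V} (hA : A ⊆ Δ) (hB : B ⊆ Δ)
    (hAB : OrthogonalSets A B) {α : V} (hαΦ : α ∈ Φ)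
    (hspan : α ∈ Submodule.span ℝ (A ∪ B)) :
    α ∈ Submodule.span ℝ A ∨ α ∈ Submodule.span ℝ B := by
  have hposcase : ∀ γ ∈ Φ, IsNonnegComb Δ γ → γ ∈ Submodule.span ℝ (A ∪ B) →
      γ ∈ Submodule.span ℝ A ∨ γ ∈ Submodule.span ℝ B := by
    by_contra hcon
    push_neg at hcon
    obtain ⟨γ0, h1, h2, h3, h4, h5⟩ := hcon
    set S : Set V := {γ | γ ∈ Φ ∧ IsNonnegComb Δ γ ∧ γ ∈ Submodule.span ℝ (A ∪ B) ∧
      γ ∉ Submodule.span ℝ A ∧ γ ∉ Submodule.span ℝ B} with hS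
    have hSfin : S.Finite := hΦ.finite.subset fun x hx => hx.1
    have hSne : S.Nonempty := ⟨γ0, h1, h2, h3, h4, h5⟩
    obtain ⟨γ, hγS, hmin⟩ := Set.exists_min_image S (ht b) hSfin hSne
    obtain ⟨hγΦ, hγp, hγs, hγA, hγB⟩ := hγS
    obtain ⟨δ, hδAB, hδpos⟩ :=
      exists_inner_pos hΦ b hb (Set.union_subset hA hB) hγΦ hγp hγs
    have hδΔ : δ ∈ Δ := (Set.union_subset hA hB) hδAB
    have hδΦ : δ ∈ Φ := hΔ.subset hδΔ
    have hne : γ ≠ δ := by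
      rintro rfl
      rcases hδAB with h | h
      · exact hγA (Submodule.subset_span h)
      · exact hγB (Submodule.subset_span h)
    have hδδ : 0 < (inner ℝ δ δ : ℝ) := inner_self_pos' hΦ hδΦ
    set n : ℝ := 2 * (inner ℝ γ δ : ℝ) / (inner ℝ δ δ : ℝ) with hn
    have hnpos : 0 < n := div_pos (by linarith) hδδ
    set β : V := γ - n • δ with hβ
    have hβΦ : β ∈ Φ := hΦ.reflect_mem δ hδΦ γ hγΦ
    have hβp : IsNonnegComb Δ β := reflect_pos hΦ hΔ b hb hγΦ hγp hδΔ hne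
    have hβs : β ∈ Submodule.span ℝ (A ∪ B) :=
      Submodule.sub_mem _ hγs (Submodule.smul_mem _ _ (Submodule.subset_span hδAB))
    have hδδ' : (inner ℝ δ δ : ℝ) ≠ 0 := hδδ.ne'
    have hβδ : (inner ℝ β δ : ℝ) = -(inner ℝ γ δ : ℝ) := by
      rw [hβ, inner_sub_left, real_inner_smul_left, hn]
      field_simp
      ring
    have hγeq : γ = β + n • δ := by rw [hβ]; abel
    have hβnot : β ∉ Submodule.span ℝ A ∧ β ∉ Submodule.span ℝ B := by
      rcases hδAB with hδA | hδB
      · refine ⟨fun h => hγA ?_, fun h => ?_⟩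
        · rw [hγeq]
          exact Submodule.add_mem _ h (Submodule.smul_mem _ _ (Submodule.subset_span hδA))
        · have h0 : (inner ℝ δ β : ℝ) = 0 :=
            orth_span hAB (Submodule.subset_span hδA) h
          rw [real_inner_comm] at h0
          rw [h0] at hβδ
          linarith
      · refine ⟨fun h => ?_, fun h => hγB ?_⟩
        · have h0 : (inner ℝ β δ : ℝ) = 0 :=
            orth_span hAB h (Submodule.subset_span hδB)
          rw [h0] at hβδ
          linarith
        · rw [hγeq]
          exact Submodule.add_mem _ h (Submodule.smul_mem _ _ (Submodule.subset_span hδB))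
    have hβS : β ∈ S := ⟨hβΦ, hβp, hβs, hβnot.1, hβnot.2⟩
    have hminβ := hmin β hβS
    have hhtδ : ht b δ = 1 := ht_simple b hb hδΔ
    have hhtβ : ht b β = ht b γ - n := by
      rw [hβ, map_sub, map_smul, hhtδ, smul_eq_mul, mul_one]
    linarith
  rcases hΔ.pos_or_neg α hαΦ with h | h
  · exact hposcase α hαΦ h hspan
  · rcases hposcase (-α) (neg_mem hΦ hαΦ) h (Submodule.neg_mem _ hspan) with h' | h'
    · left; simpa using Submodule.neg_mem _ h'
    · right; simpa using Submodule.neg_mem _ h'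

end Aux

/-- For `I, K ⊆ Π` with `I` orthogonal to `K \ I`:
`−(Φ \ Γ(I,K)) = Γ(K\I, I)`, i.e.
`{−α ∣ α ∈ Φ \ (Φ_I ∪ (Φ⁺ \ Φ_K))} = Φ_{K\I} ∪ (Φ⁺ \ Φ_I)`. -/




theorem statement12 (Φ Δ : Set V) (hΦ : IsRootSystem Φ) (hΔ : IsBase Φ Δ)
    (I K : Set V) (hI : I ⊆ Δ) (hK : K ⊆ Δ) (horth : OrthogonalSets I (K \ I)) :
    (fun α => -α) '' (Φ \ (rootsIn Φ I ∪ (posRoots Φ Δ \ rootsIn Φ K))) =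
      rootsIn Φ (K \ I) ∪ (posRoots Φ Δ \ rootsIn Φ I) := by
  classical
  have hspan_top : Submodule.span ℝ Δ = ⊤ := Aux.span_delta_eq_top hΦ hΔ
  let b : Module.Basis Δ ℝ V := Module.Basis.mk hΔ.indep (by rw [Subtype.range_coe, hspan_top])
  have hb : ∀ i : Δ, b i = (i : V) := fun i => Module.Basis.mk_apply _ _ _
  have hIK : OrthogonalSets (K ∩ I) (K \ I) := fun a ha c hc => horth a ha.2 c hc
  have hKcover : K ∩ I ∪ K \ I = K := Set.inter_union_diff K I
  have hnotboth : ∀ x ∈ Φ, x ∈ Submodule.span ℝ (K \ I) → x ∉ Submodule.span ℝ I := by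
    intro x hx h1 h2
    have h0 := Aux.orth_span horth h2 h1
    exact (Aux.inner_self_pos' hΦ hx).ne' h0
  ext x
  rw [Set.mem_union]
  constructor
  · rintro ⟨α, hα, rfl⟩
    obtain ⟨hαΦ, hnot⟩ := hα
    have hnI : α ∉ rootsIn Φ I := fun h => hnot (Or.inl h)
    have hn2 : α ∉ posRoots Φ Δ \ rootsIn Φ K := fun h => hnot (Or.inr h)
    rcases hΔ.pos_or_neg α hαΦ with hp | hn
    · left
      have hαK : α ∈ rootsIn Φ K := by
        by_contra hK
        exact hn2 ⟨⟨hαΦ, hp⟩, hK⟩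
      have hspanU : α ∈ Submodule.span ℝ (K ∩ I ∪ K \ I) := by
        rw [hKcover]; exact hαK.2
      rcases Aux.decomp hΦ hΔ b hb (fun v hv => hI hv.2) (fun v hv => hK hv.1) hIK hαΦ
          hspanU with h | h
      · exact absurd (Aux.mem_rootsIn.2 ⟨hαΦ,
          Submodule.span_mono Set.inter_subset_right h⟩) hnI
      · exact Aux.mem_rootsIn.2 ⟨Aux.neg_mem hΦ hαΦ, Submodule.neg_mem _ h⟩
    · right
      refine ⟨⟨Aux.neg_mem hΦ hαΦ, hn⟩, fun h => hnI ?_⟩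
      refine Aux.mem_rootsIn.2 ⟨hαΦ, ?_⟩
      have := Submodule.neg_mem _ h.2
      simpa using this
  · intro hx
    refine ⟨-x, ?_, neg_neg x⟩
    rcases hx with h | h
    · obtain ⟨hxΦ, hxspan⟩ := h
      refine ⟨Aux.neg_mem hΦ hxΦ, ?_⟩
      rintro (h' | h')
      · have hxI : x ∈ Submodule.span ℝ I := by
          have := Submodule.neg_mem _ h'.2
          simpa using this
        exact hnotboth x hxΦ hxspan hxI
      · refine h'.2 (Aux.mem_rootsIn.2 ⟨Aux.neg_mem hΦ hxΦ, ?_⟩)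
        exact Submodule.neg_mem _ (Submodule.span_mono Set.diff_subset hxspan)
    · obtain ⟨hxP, hxnI⟩ := h
      refine ⟨Aux.neg_mem hΦ hxP.1, ?_⟩
      rintro (h' | h')
      · refine hxnI (Aux.mem_rootsIn.2 ⟨hxP.1, ?_⟩)
        have := Submodule.neg_mem _ h'.2
        simpa using this
      · exact Aux.not_pos_and_neg hΦ b hb hxP.1 hxP.2 h'.1.2
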